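/- For every natural number h and every real λ ≥ 1 there exists a constant c such that the following holds: for every graph G of highway dimension at most h, every vertex v ∈ V, and all reals r ≥ r' > 0 with r/r' ≤ λ, there exists a set V' ⊆ V with |V'| ≤ c such that B(v,r) ⊆ ∪_{v' ∈ V'} B(v',r'). -/
import Mathlib


open SimpleGraph

/-- The length (total weight) of a walk under an edge-weight function `w`. -/
noncomputable def wlen {V : Type*} {G : SimpleGraph V} (w : Sym2 V → ℝ) {u v : V}
    (p : G.Walk u v) : ℝ :=
  (p.edges.map w).sum

/-- `p` is a subwalk (subpath) of `q`. -/
def IsSubwalk {V : Type*} {G : SimpleGraph V} {u v a b : V}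
    (p : G.Walk u v) (q : G.Walk a b) : Prop :=
  ∃ (q1 : G.Walk a u) (q2 : G.Walk v b), q = (q1.append p).append q2

/-- Shortest-path distance as the infimum of walk lengths. -/
noncomputable def wdist {V : Type*} (G : SimpleGraph V) (w : Sym2 V → ℝ) (u v : V) : ℝ :=
  sInf {x : ℝ | ∃ p : G.Walk u v, x = wlen w p}

/-- A finite connected positively-weighted graph (all weights at least 1) with
unique shortest paths, in which every edge is the unique shortest path between
its endpoints.  `sp u v` is the unique shortest path from `u` to `v`. -/
structure Setting (V : Type) [Fintype V] where
  G : SimpleGraph V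
  w : Sym2 V → ℝ
  connected : G.Connected
  one_le_w : ∀ e ∈ G.edgeSet, 1 ≤ w e
  sp : ∀ u v : V, G.Walk u v
  sp_isPath : ∀ u v : V, (sp u v).IsPath
  sp_shortest : ∀ (u v : V) (q : G.Walk u v), wlen w (sp u v) ≤ wlen w q
  sp_unique : ∀ (u v : V) (q : G.Walk u v), q.IsPath →
    wlen w q = wlen w (sp u v) → q = sp u v
  edge_sp : ∀ (u v : V) (h : G.Adj u v),
    sp u v = SimpleGraph.Walk.cons h SimpleGraph.Walk.nil

namespace Setting

variable {V : Type} [Fintype V]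

/-- Shortest-path distance `d(u,v)`. -/
noncomputable def d (S : Setting V) (u v : V) : ℝ := wlen S.w (S.sp u v)

/-- The ball `B(v,r)`. -/
def ball (S : Setting V) (v : V) (r : ℝ) : Set V := {u : V | S.d v u ≤ r}

/-- `maxedge(p(u,v)) ≤ r`: every edge of the shortest path has weight at most `r`. -/
def maxedgeLE (S : Setting V) (u v : V) (r : ℝ) : Prop :=
  ∀ e ∈ (S.sp u v).edges, S.w e ≤ r

/-- An `(r,k)` vertex cover. -/
def IsVertexCover (S : Setting V) (r : ℝ) (k : ℕ) (C : Set V) : Prop :=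
  (∀ v1 v2 : V, r < S.d v1 v2 → S.maxedgeLE v1 v2 r →
      ∃ c ∈ C, c ∈ (S.sp v1 v2).support) ∧
  (∀ v : V, (S.ball v (2 * r) ∩ C).ncard ≤ k)

/-- Discrete highway dimension at most `h`. -/
def DiscreteHDLE (S : Setting V) (h : ℕ) : Prop :=
  ∀ (v : V) (r : ℝ), 0 < r →
    ∃ C : Set V, C.ncard ≤ h ∧
      ∀ v1 v2 : V, (∀ x ∈ (S.sp v1 v2).support, x ∈ S.ball v (4 * r)) →
        r < S.d v1 v2 → ∃ c ∈ C, c ∈ (S.sp v1 v2).support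

/-- The (unique) shortest path from `v1` to `v2` is `r`-significant:
it has an `r`-witness. -/
def RSignificant (S : Setting V) (r : ℝ) (v1 v2 : V) : Prop :=
  ∃ a b : V, (a = v1 ∨ S.G.Adj a v1) ∧ (b = v2 ∨ S.G.Adj b v2) ∧
    r ≤ S.d a b ∧ IsSubwalk (S.sp v1 v2) (S.sp a b)

/-- The shortest path from `v1` to `v2` is `(r,2r)`-close to `v`,
i.e. it belongs to `S(v,r)`. -/
def InSvr (S : Setting V) (v : V) (r : ℝ) (v1 v2 : V) : Prop :=
  ∃ a b : V, (a = v1 ∨ S.G.Adj a v1) ∧ (b = v2 ∨ S.G.Adj b v2) ∧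
    r ≤ S.d a b ∧ IsSubwalk (S.sp v1 v2) (S.sp a b) ∧
    ∃ x ∈ (S.sp a b).support, S.d v x ≤ 2 * r

/-- Highway dimension at most `h`. -/
def HighwayDimLE (S : Setting V) (h : ℕ) : Prop :=
  ∀ (r : ℝ), 0 < r → ∀ v : V,
    ∃ C : Set V, C.ncard ≤ h ∧
      ∀ v1 v2 : V, S.InSvr v r v1 v2 → ∃ c ∈ C, c ∈ (S.sp v1 v2).support

/-- An `(r,h')`-SPHS. -/
def IsSPHS (S : Setting V) (r : ℝ) (h' : ℕ) (C : Set V) : Prop :=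
  (∀ v1 v2 : V, S.RSignificant r v1 v2 → ∃ c ∈ C, c ∈ (S.sp v1 v2).support) ∧
  (∀ v : V, (C ∩ S.ball v (2 * r)).ncard ≤ h')

/-- Adjacency in the `r`-shortcut graph `G(C,r)`. -/
def shortcutAdj (S : Setting V) (C : Set V) (r : ℝ) (v1 v2 : V) : Prop :=
  v1 ≠ v2 ∧ v1 ∈ C ∧ v2 ∈ C ∧ S.d v1 v2 ≤ r ∧
    ∀ c ∈ C, c ∈ (S.sp v1 v2).support → c = v1 ∨ c = v2

/-- An `(r,η)` path cover, a set of shortest paths represented by their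
endpoint pairs. -/
def IsPathCover (S : Setting V) (r : ℝ) (η : ℕ) (P : Set (V × V)) : Prop :=
  (∀ q ∈ P, r / 4 ≤ S.d q.1 q.2 ∧ S.d q.1 q.2 ≤ r) ∧
  (∀ v1 v2 : V, r / 2 ≤ S.d v1 v2 → S.d v1 v2 ≤ r → S.maxedgeLE v1 v2 (r / 8) →
    ∃ q ∈ P, IsSubwalk (S.sp q.1 q.2) (S.sp v1 v2) ∧
      S.d v1 q.1 ≤ r / 8 ∧ S.d q.2 v2 ≤ r / 8) ∧
  (∀ v : V, {q ∈ P | ∃ x ∈ (S.sp q.1 q.2).support, S.d v x ≤ 4 * r}.ncard ≤ η)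

/-- A pair of vertices of `Cm` is *considered* at level `i`. -/
def Considered (S : Setting V) (Cm : Set V) (i : ℤ) (q : V × V) : Prop :=
  q.1 ∈ Cm ∧ q.2 ∈ Cm ∧
    3 / 4 * (8 : ℝ) ^ i ≤ S.d q.1 q.2 ∧ S.d q.1 q.2 ≤ (8 : ℝ) ^ i ∧
    S.maxedgeLE q.1 q.2 ((8 : ℝ) ^ (i - 1))

/-- `C'` is a valid output of the greedy construction at level `i` from `Cm`. -/
def ValidGreedy (S : Setting V) (Cm : Set V) (i : ℤ) (C' : Set V) : Prop :=
  ∃ (m : ℕ) (q : Fin m → V × V),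
    Function.Injective q ∧
    (∀ p : V × V, S.Considered Cm i p ↔ ∃ j : Fin m, q j = p) ∧
    ∃ Sc : Fin (m + 1) → Set V,
      Sc 0 = ∅ ∧ Sc (Fin.last m) = C' ∧
      ∀ j : Fin m,
        ((∃ c ∈ Sc j.castSucc, c ∈ (S.sp (q j).1 (q j).2).support) →
          Sc j.succ = Sc j.castSucc) ∧
        ((¬ ∃ c ∈ Sc j.castSucc, c ∈ (S.sp (q j).1 (q j).2).support) →
          ∃ c ∈ Cm, c ∈ (S.sp (q j).1 (q j).2).support ∧
            (∀ c' ∈ Cm, c' ∈ (S.sp (q j).1 (q j).2).support →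
              |S.d (q j).1 c - S.d (q j).1 (q j).2 / 2| ≤
                |S.d (q j).1 c' - S.d (q j).1 (q j).2 / 2|) ∧
            Sc j.succ = insert c (Sc j.castSucc))

/-- The set of endpoints of edges of weight greater than `t`. -/
def bigEdgeEnds (S : Setting V) (t : ℝ) : Set V :=
  {x : V | ∃ e ∈ S.G.edgeSet, t < S.w e ∧ x ∈ e}

end Setting

namespace Setting

variable {V : Type} [Fintype V]

lemma wlen_nonneg (S : Setting V) {u v : V} (p : S.G.Walk u v) : 0 ≤ wlen S.w p := by
  apply List.sum_nonneg
  intro x hx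
  simp only [List.mem_map] at hx
  obtain ⟨e, he, rfl⟩ := hx
  exact le_trans zero_le_one (S.one_le_w e (p.edges_subset_edgeSet he))

lemma wlen_append {V : Type*} {G : SimpleGraph V} (w : Sym2 V → ℝ) {u v x : V}
    (p : G.Walk u v) (q : G.Walk v x) :
    wlen w (p.append q) = wlen w p + wlen w q := by
  simp [wlen, Walk.edges_append]

lemma d_nonneg (S : Setting V) (u v : V) : 0 ≤ S.d u v := S.wlen_nonneg _

lemma d_symm (S : Setting V) (u v : V) : S.d u v = S.d v u := by
  have h1 : S.d u v ≤ wlen S.w (S.sp v u).reverse := S.sp_shortest u v _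
  have h2 : S.d v u ≤ wlen S.w (S.sp u v).reverse := S.sp_shortest v u _
  have e1 : wlen S.w (S.sp v u).reverse = S.d v u := by
    simp [wlen, Walk.edges_reverse, d, List.map_reverse, List.sum_reverse]
  have e2 : wlen S.w (S.sp u v).reverse = S.d u v := by
    simp [wlen, Walk.edges_reverse, d, List.map_reverse, List.sum_reverse]
  rw [e1] at h1; rw [e2] at h2; linarith

lemma sp_decomp (S : Setting V) {x y z : V} (q1 : S.G.Walk x z) (q2 : S.G.Walk z y)
    (h : S.sp x y = q1.append q2) :
    q1 = S.sp x z ∧ S.d x z + wlen S.w q2 = S.d x y := by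
  have hw : S.d x y = wlen S.w q1 + wlen S.w q2 := by
    rw [d, h, wlen_append]
  have h1 : S.d x z ≤ wlen S.w q1 := S.sp_shortest x z q1
  have h2 : wlen S.w q1 ≤ S.d x z := by
    by_contra hc
    push_neg at hc
    have := S.sp_shortest x y ((S.sp x z).append q2)
    rw [wlen_append] at this
    have : S.d x y ≤ S.d x z + wlen S.w q2 := this
    linarith
  have heq : wlen S.w q1 = S.d x z := le_antisymm h2 h1
  have hp : q1.IsPath := by
    have := S.sp_isPath x y
    rw [h] at this
    exact this.of_append_left
  exact ⟨S.sp_unique x z q1 hp heq, by linarith⟩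

lemma d_le_of_mem_support (S : Setting V) {x y c : V} (hc : c ∈ (S.sp x y).support) :
    S.d x c ≤ S.d x y := by
  classical
  have hspec := ((S.sp x y).take_spec hc).symm
  obtain ⟨_, h2⟩ := S.sp_decomp _ _ hspec
  have := S.wlen_nonneg ((S.sp x y).dropUntil c hc)
  linarith

/-- Find the threshold vertices: last vertex within `< ρ` of `x` and the next one. -/
lemma find_threshold (S : Setting V) (ρ : ℝ) (hρ : 0 < ρ) (x : V) :
    ∀ (n : ℕ) (u : V), (S.sp x u).length = n → ρ ≤ S.d x u →
      ∃ z z', S.d x z < ρ ∧ ρ ≤ S.d x z' ∧ S.G.Adj z' z ∧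
        IsSubwalk (S.sp x z) (S.sp x z') ∧ x ∈ (S.sp x z').support := by
  intro n
  induction n using Nat.strong_induction_on with
  | _ n ih =>
    intro u hlen hd
    -- decompose sp x u from the end
    cases hrev : (S.sp x u).reverse with
    | nil =>
      exfalso
      have hnil : S.sp x x = Walk.nil := by
        have := congrArg Walk.reverse hrev
        simpa using this
      have hz : S.d x x = 0 := by rw [d, hnil]; simp [wlen]
      linarith
    | @cons _ z0 _ hadj q' =>
      have hp : S.sp x u = q'.reverse.append (Walk.cons hadj.symm Walk.nil) := by
        have := congrArg Walk.reverse hrev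
        simpa [Walk.reverse_cons] using this
      obtain ⟨hq1, hsum⟩ := S.sp_decomp q'.reverse (Walk.cons hadj.symm Walk.nil) hp
      have hwedge : 1 ≤ wlen S.w (Walk.cons hadj.symm Walk.nil) := by
        have : wlen S.w (Walk.cons hadj.symm (Walk.nil : S.G.Walk u u)) = S.w s(z0, u) := by
          simp [wlen]
        rw [this]
        exact S.one_le_w _ hadj.symm
      have hlt : S.d x z0 < S.d x u := by linarith
      by_cases hcase : S.d x z0 < ρ
      · refine ⟨z0, u, hcase, hd, hadj, ?_, Walk.start_mem_support _⟩
        exact ⟨Walk.nil, Walk.cons hadj.symm Walk.nil, by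
          rw [Walk.nil_append, ← hq1]; exact hp⟩
      · push_neg at hcase
        have hlen' : (S.sp x z0).length < n := by
          rw [← hq1, Walk.length_reverse]
          have : (S.sp x u).length = q'.length + 1 := by
            rw [← Walk.length_reverse (S.sp x u), hrev, Walk.length_cons]
          omega
        exact ih _ hlen' z0 rfl hcase

lemma ncard_biUnion_le (C : Set V) (F : V → Set V) (M : ℕ)
    (hF : ∀ c ∈ C, (F c).ncard ≤ M) :
    (⋃ c ∈ C, F c).ncard ≤ C.ncard * M := by
  classical
  have hfin : ∀ s : Set V, s.Finite := fun s => s.toFinite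
  calc (⋃ c ∈ C, F c).ncard
      ≤ (↑(C.toFinite.toFinset.biUnion fun c => (F c).toFinite.toFinset) : Set V).ncard := by
        apply Set.ncard_le_ncard _ (hfin _)
        intro y hy
        simp only [Set.mem_iUnion] at hy
        obtain ⟨c, hc, hyc⟩ := hy
        simp only [Finset.coe_biUnion, Set.mem_iUnion, Finset.mem_coe,
          Set.Finite.mem_toFinset]
        exact ⟨c, hc, hyc⟩
    _ = (C.toFinite.toFinset.biUnion fun c => (F c).toFinite.toFinset).card := by
        rw [Set.ncard_coe_finset]
    _ ≤ C.toFinite.toFinset.card * M := by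
        apply Finset.card_biUnion_le_card_mul
        intro c hc
        rw [← Set.ncard_eq_toFinset_card (F c) (F c).toFinite]
        exact hF c (by simpa using hc)
    _ = C.ncard * M := by rw [Set.ncard_eq_toFinset_card _ C.toFinite]

lemma cover_step (S : Setting V) {h : ℕ} (hHD : S.HighwayDimLE h) (u : V) (ρ : ℝ)
    (hρ : 0 < ρ) :
    ∃ C : Set V, C.ncard ≤ h + 1 ∧ S.ball u (2 * ρ) ⊆ ⋃ c ∈ C, S.ball c ρ := by
  obtain ⟨C0, hC0card, hC0⟩ := hHD ρ hρ u
  refine ⟨insert u C0, le_trans (Set.ncard_insert_le u C0) (by omega), ?_⟩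
  intro x hx
  have hux : S.d u x ≤ 2 * ρ := hx
  by_cases hcase : S.d x u < ρ
  · apply Set.mem_biUnion (Set.mem_insert u C0)
    show S.d u x ≤ ρ
    rw [S.d_symm u x]; linarith
  · push_neg at hcase
    obtain ⟨z, z', hz, hz', hadj, hsub, hxsup⟩ :=
      S.find_threshold ρ hρ x (S.sp x u).length u rfl hcase
    have hInSvr : S.InSvr u ρ x z := by
      refine ⟨x, z', Or.inl rfl, Or.inr hadj, hz', hsub, x, hxsup, ?_⟩
      linarith
    obtain ⟨c, hcC0, hcsup⟩ := hC0 x z hInSvr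
    apply Set.mem_biUnion (Set.mem_insert_of_mem u hcC0)
    show S.d c x ≤ ρ
    rw [← S.d_symm]
    have := S.d_le_of_mem_support hcsup
    linarith

lemma cover_iter (S : Setting V) {h : ℕ} (hHD : S.HighwayDimLE h) :
    ∀ (k : ℕ) (u : V) (ρ : ℝ), 0 < ρ →
      ∃ C : Set V, C.ncard ≤ (h + 1) ^ k ∧
        S.ball u (2 ^ k * ρ) ⊆ ⋃ c ∈ C, S.ball c ρ := by
  intro k
  induction k with
  | zero =>
    intro u ρ hρ
    refine ⟨{u}, by simp, ?_⟩
    intro x hx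
    apply Set.mem_biUnion (Set.mem_singleton u)
    simpa using hx
  | succ k ihk =>
    intro u ρ hρ
    obtain ⟨C1, hC1card, hC1⟩ := S.cover_step hHD u (2 ^ k * ρ) (by positivity)
    choose F hFcard hFsub using fun c => ihk c ρ hρ
    refine ⟨⋃ c ∈ C1, F c, ?_, ?_⟩
    · calc (⋃ c ∈ C1, F c).ncard ≤ C1.ncard * (h + 1) ^ k :=
            Setting.ncard_biUnion_le C1 F _ (fun c _ => hFcard c)
        _ ≤ (h + 1) * (h + 1) ^ k := Nat.mul_le_mul_right _ hC1card
        _ = (h + 1) ^ (k + 1) := by ring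
    · intro x hx
      have hx' : x ∈ S.ball u (2 * (2 ^ k * ρ)) := by
        have : (2 : ℝ) ^ (k + 1) * ρ = 2 * (2 ^ k * ρ) := by ring
        simpa [Setting.ball, this] using hx
      obtain ⟨c, hc, hxc⟩ := by
        have := hC1 hx'
        simpa only [Set.mem_iUnion, exists_prop] using this
      have := hFsub c hxc
      obtain ⟨c', hc', hxc'⟩ := by
        simpa only [Set.mem_iUnion, exists_prop] using this
      exact Set.mem_biUnion (Set.mem_biUnion hc hc') hxc'

end Setting

/-- Generalized doubling: for bounded ratio `r/r' ≤ λ`,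
`B(v,r)` is covered by a bounded number of balls of radius `r'`. -/
theorem stmt3 (h : ℕ) (lam : ℝ) (hlam : 1 ≤ lam) :
    ∃ c : ℕ, ∀ (V : Type) [Fintype V] (S : Setting V), S.HighwayDimLE h →
      ∀ (v : V) (r r' : ℝ), 0 < r' → r' ≤ r → r / r' ≤ lam →
        ∃ V' : Set V, V'.ncard ≤ c ∧ S.ball v r ⊆ ⋃ v' ∈ V', S.ball v' r' := by
  obtain ⟨k, hk⟩ := pow_unbounded_of_one_lt lam (by norm_num : (1:ℝ) < 2)
  refine ⟨(h + 1) ^ k, ?_⟩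
  intro V _ S hHD v r r' hr' hr'r hratio
  obtain ⟨C, hCcard, hCsub⟩ := S.cover_iter hHD k v r' hr'
  refine ⟨C, hCcard, ?_⟩
  intro x hx
  apply hCsub
  show S.d v x ≤ 2 ^ k * r'
  have h1 : S.d v x ≤ r := hx
  have h2 : r ≤ lam * r' := by
    rw [div_le_iff₀ hr'] at hratio; linarith
  have h3 : lam * r' ≤ 2 ^ k * r' := by
    apply mul_le_mul_of_nonneg_right (le_of_lt hk) (le_of_lt hr')
  linarith
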